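/- arXiv:1410.5373 — 2 statements merged into one kernel-verified Lean document; each statement's English description precedes it below -/
import Mathlib

section
/- Let λ : ℕ → (0,∞) satisfy λ(n) = o(n) and converge to a finite positive limit, and let β(n) = log^{(K)} n for some finite integer K > 1. For each n, let C_n be a Bernoulli(p(n)) random m(n)×n test matrix with p(n) = 1/⌈β(n)·λ(n)⌉ and m(n) = ⌈e·(⌈β(n)·λ(n)⌉)²·log n⌉ = e·(β(n)·λ(n))²·log n·(1+o(1)), drawn independently of the defective set 𝒟_n of the Poisson PGT model on n subjects with parameter λ(n), and let D̂_n be the output of the cover decoder applied to C_n and the outcome vector. Then P(D̂_n ≠ 𝒟_n) → 0 as n → ∞. -/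
open Filter Finset

/-- The `K`-fold iterated natural logarithm. -/
noncomputable def iterLog : ℕ → ℝ → ℝ
  | 0, x => x
  | (K + 1), x => Real.log (iterLog K x)

/-- `P(𝒟 = S)` in the Poisson PGT model on `n` subjects with parameter `lam`. -/
noncomputable def pgtWeight (n : ℕ) (lam : ℝ) (S : Finset (Fin n)) : ℝ :=
  (Real.exp lam / ∑ d ∈ Finset.range (n + 1), lam ^ d / d.factorial) *
    lam ^ S.card * Real.exp (-lam) * (n - S.card).factorial / n.factorial

/-- Probability of a realization `C` of an i.i.d. Bernoulli(p) random test matrix. -/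
noncomputable def bernWeight {m n : ℕ} (p : ℝ) (C : Fin m → Fin n → Bool) : ℝ :=
  ∏ j : Fin m, ∏ i : Fin n, if C j i then p else 1 - p

/-- Outcome vector: test `j` is positive iff some defective participates in it. -/
def outcome {m n : ℕ} (C : Fin m → Fin n → Bool) (S : Finset (Fin n)) : Fin m → Bool :=
  fun j => decide (∃ i ∈ S, C j i = true)

/-- The cover decoder: `D̂ = {i : supp(x_i) ⊆ supp(y)}`. -/
def coverDecoder {m n : ℕ} (C : Fin m → Fin n → Bool) (y : Fin m → Bool) : Finset (Fin n) :=
  Finset.univ.filter (fun i => ∀ j, C j i = true → y j = true)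

/-- Error probability of the cover decoder with an i.i.d. Bernoulli(p) test matrix of
`mn` tests, drawn independently of the defective set of the Poisson PGT model. -/
noncomputable def errProbCover (n mn : ℕ) (lam p : ℝ) : ℝ :=
  ∑ C : Fin mn → Fin n → Bool, ∑ S : Finset (Fin n),
    bernWeight p C * pgtWeight n lam S *
      (if coverDecoder C (outcome C S) ≠ S then 1 else 0)

section Finite
variable {mn n : ℕ} {p : ℝ}

variable {mn n : ℕ} {p : ℝ}

lemma bernWeight_nonneg (h0 : 0 ≤ p) (h1 : p ≤ 1) (C : Fin mn → Fin n → Bool) :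
    0 ≤ bernWeight p C := by
  apply Finset.prod_nonneg; intro j _; apply Finset.prod_nonneg; intro i _
  split <;> linarith

lemma sum_bernWeight : ∑ C : Fin mn → Fin n → Bool, bernWeight p C = 1 := by
  unfold bernWeight
  rw [← Fintype.prod_sum (fun (_ : Fin mn) (r : Fin n → Bool) => ∏ i, if r i then p else 1 - p)]
  have h : (∑ r : Fin n → Bool, ∏ i : Fin n, if r i then p else 1 - p) = 1 := by
    rw [← Fintype.prod_sum (fun (_ : Fin n) (b : Bool) => if b then p else 1 - p)]
    simp
  rw [h]; simp

lemma subset_coverDecoder (C : Fin mn → Fin n → Bool) (S : Finset (Fin n)) :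
    S ⊆ coverDecoder C (outcome C S) := by
  intro i hi
  rw [coverDecoder, Finset.mem_filter]
  simp only [coverDecoder, mem_filter, mem_univ, true_and, outcome]
  intro j hj
  exact decide_eq_true ⟨i, hi, hj⟩

lemma mem_coverDecoder {C : Fin mn → Fin n → Bool} {S : Finset (Fin n)} {i : Fin n} :
    i ∈ coverDecoder C (outcome C S) ↔ ∀ j, C j i = true → ∃ i' ∈ S, C j i' = true := by
  simp [coverDecoder, outcome]

/-- probability that a fixed non-defective is covered -/
lemma cover_prob (h0 : 0 ≤ p) (h1 : p ≤ 1) (S : Finset (Fin n)) {i : Fin n} (hi : i ∉ S) :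
    ∑ C : Fin mn → Fin n → Bool,
      bernWeight p C * (if i ∈ coverDecoder C (outcome C S) then (1:ℝ) else 0)
      = (1 - p * (1 - p) ^ S.card) ^ mn := by
  classical
  -- rewrite indicator as a product over rows
  have hind : ∀ C : Fin mn → Fin n → Bool,
      (if i ∈ coverDecoder C (outcome C S) then (1:ℝ) else 0)
        = ∏ j : Fin mn, (if (C j i = true → ∃ i' ∈ S, C j i' = true) then (1:ℝ) else 0) := by
    intro C
    by_cases h : i ∈ coverDecoder C (outcome C S)
    · rw [if_pos h]
      rw [mem_coverDecoder] at h
      rw [Finset.prod_congr rfl (fun j _ => if_pos (h j))]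
      simp
    · rw [if_neg h]
      rw [mem_coverDecoder] at h
      push_neg at h
      obtain ⟨j, hj1, hj2⟩ := h
      refine (Finset.prod_eq_zero (mem_univ j) ?_).symm
      rw [if_neg]
      intro hcon
      obtain ⟨i', hi', hci⟩ := hcon hj1
      exact hj2 i' hi' hci
  have key : ∀ C : Fin mn → Fin n → Bool,
      bernWeight p C * (if i ∈ coverDecoder C (outcome C S) then (1:ℝ) else 0)
        = ∏ j : Fin mn, ((∏ i' : Fin n, if C j i' then p else 1 - p) *
            (if (C j i = true → ∃ i' ∈ S, C j i' = true) then (1:ℝ) else 0)) := by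
    intro C
    rw [hind C, bernWeight, ← Finset.prod_mul_distrib]
  rw [Finset.sum_congr rfl (fun C _ => key C),
    ← Fintype.prod_sum (fun (_ : Fin mn) (r : Fin n → Bool) =>
      (∏ i' : Fin n, if r i' then p else 1 - p) *
        (if (r i = true → ∃ i' ∈ S, r i' = true) then (1:ℝ) else 0))]
  -- now per-row computation
  have row : (∑ r : Fin n → Bool, (∏ i' : Fin n, if r i' then p else 1 - p) *
      (if (r i = true → ∃ i' ∈ S, r i' = true) then (1:ℝ) else 0))
      = 1 - p * (1 - p) ^ S.card := by
    have hsplit : ∀ r : Fin n → Bool,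
        (if (r i = true → ∃ i' ∈ S, r i' = true) then (1:ℝ) else 0)
          = 1 - (if (r i = true ∧ ∀ i' ∈ S, r i' = false) then (1:ℝ) else 0) := by
      intro r
      by_cases h : r i = true → ∃ i' ∈ S, r i' = true
      · rw [if_pos h, if_neg]; · ring
        rintro ⟨h1, h2⟩
        obtain ⟨i', hi', hri'⟩ := h h1
        rw [h2 i' hi'] at hri'; exact Bool.false_ne_true hri'
      · rw [if_neg h, if_pos]; · ring
        push_neg at h
        refine ⟨h.1, fun i' hi' => ?_⟩
        by_contra hc
        exact h.2 i' hi' (by simpa using hc)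
    simp only [hsplit, mul_sub, mul_one, Finset.sum_sub_distrib]
    have h1 : (∑ r : Fin n → Bool, ∏ i' : Fin n, if r i' then p else 1 - p) = 1 := by
      rw [← Fintype.prod_sum (fun (_ : Fin n) (b : Bool) => if b then p else 1 - p)]
      simp
    have h2 : (∑ r : Fin n → Bool, (∏ i' : Fin n, if r i' then p else 1 - p) *
        (if (r i = true ∧ ∀ i' ∈ S, r i' = false) then (1:ℝ) else 0))
        = p * (1 - p) ^ S.card := by
      have hbad : ∀ r : Fin n → Bool,
          (if (r i = true ∧ ∀ i' ∈ S, r i' = false) then (1:ℝ) else 0)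
            = ∏ i' : Fin n, (if i' = i then (if r i' then (1:ℝ) else 0)
                else if i' ∈ S then (if r i' then 0 else 1) else 1) := by
        intro r
        by_cases h : r i = true ∧ ∀ i' ∈ S, r i' = false
        · rw [if_pos h]
          refine (Finset.prod_eq_one (fun i' _ => ?_)).symm
          by_cases hii : i' = i
          · subst hii; simp [h.1]
          · rw [if_neg hii]
            by_cases hS : i' ∈ S
            · simp [hS, h.2 i' hS]
            · simp [hS]
        · rw [if_neg h]
          push_neg at h
          by_cases hri : r i = true
          · obtain ⟨i', hi', hri'⟩ := h hri
            refine (Finset.prod_eq_zero (mem_univ i') ?_).symm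
            have hii : i' ≠ i := fun hc => hi (hc ▸ hi')
            rw [if_neg hii, if_pos hi', if_pos (by simpa using hri')]
          · refine (Finset.prod_eq_zero (mem_univ i) ?_).symm
            rw [if_pos rfl, if_neg hri]
      have hterm : ∀ r : Fin n → Bool,
          (∏ i' : Fin n, if r i' then p else 1 - p) *
            (if (r i = true ∧ ∀ i' ∈ S, r i' = false) then (1:ℝ) else 0)
          = ∏ i' : Fin n, ((if r i' then p else 1 - p) *
              (if i' = i then (if r i' then (1:ℝ) else 0)
                else if i' ∈ S then (if r i' then 0 else 1) else 1)) := by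
        intro r
        rw [hbad r, ← Finset.prod_mul_distrib]
      rw [Finset.sum_congr rfl (fun r _ => hterm r),
        ← Fintype.prod_sum (fun (i' : Fin n) (b : Bool) =>
          (if b then p else 1 - p) *
            (if i' = i then (if b then (1:ℝ) else 0)
              else if i' ∈ S then (if b then 0 else 1) else 1))]
      have hfac : ∀ i' : Fin n, (∑ b : Bool, (if b then p else 1 - p) *
          (if i' = i then (if b then (1:ℝ) else 0)
            else if i' ∈ S then (if b then 0 else 1) else 1))
          = if i' = i then p else if i' ∈ S then 1 - p else 1 := by
        intro i'
        by_cases hii : i' = i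
        · simp [hii]
        · by_cases hS : i' ∈ S <;> simp [hii, hS]
      rw [Finset.prod_congr rfl (fun i' _ => hfac i')]
      rw [← Finset.mul_prod_erase univ _ (mem_univ i), if_pos rfl]
      congr 1
      have : ∀ i' ∈ univ.erase i, (if i' = i then p else if i' ∈ S then 1 - p else 1)
          = if i' ∈ S then 1 - p else 1 := by
        intro i' hi'
        rw [if_neg (Finset.ne_of_mem_erase hi')]
      rw [Finset.prod_congr rfl this, Finset.prod_ite_mem]
      have hSe : (univ.erase i) ∩ S = S := by
        ext x
        simp only [mem_inter, mem_erase, mem_univ, and_true, true_and]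
        constructor
        · exact fun h => h.2
        · exact fun h => ⟨fun hc => hi (hc ▸ h), h⟩
      rw [hSe, Finset.prod_const]
    rw [h1, h2]
  rw [row, Finset.prod_const, Finset.card_univ, Fintype.card_fin]


end Finite

lemma sum_finset_card {n : ℕ} (f : ℕ → ℝ) :
    ∑ S : Finset (Fin n), f S.card = ∑ d ∈ range (n + 1), (n.choose d : ℝ) * f d := by
  classical
  rw [← Finset.powerset_univ, Finset.sum_powerset]
  rw [Finset.card_univ, Fintype.card_fin]
  refine Finset.sum_congr rfl (fun d _ => ?_)
  rw [Finset.sum_congr rfl (fun S hS => by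
    rw [(Finset.mem_powersetCard.mp hS).2]), Finset.sum_const, Finset.card_powersetCard,
    Finset.card_univ, Fintype.card_fin, nsmul_eq_mul]

lemma choose_factorial_div {n : ℕ} (d : ℕ) (hd : d ≤ n) :
    (n.choose d : ℝ) * (n - d).factorial / n.factorial = 1 / d.factorial := by
  have h := Nat.choose_mul_factorial_mul_factorial hd
  have hn : (n.factorial : ℝ) ≠ 0 := Nat.cast_ne_zero.mpr (Nat.factorial_ne_zero n)
  have hdf : (d.factorial : ℝ) ≠ 0 := Nat.cast_ne_zero.mpr (Nat.factorial_ne_zero d)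
  have h' : (n.choose d : ℝ) * d.factorial * (n - d).factorial = n.factorial := by
    exact_mod_cast congrArg (Nat.cast : ℕ → ℝ) h
  field_simp
  linarith [h']

section Pgt
variable {n : ℕ} {lam : ℝ}

lemma Z_ge_one (hl : 0 ≤ lam) : 1 ≤ ∑ d ∈ range (n + 1), lam ^ d / d.factorial := by
  have h0 : (0:ℕ) ∈ range (n + 1) := by simp
  have := Finset.single_le_sum (f := fun d => lam ^ d / (d.factorial : ℝ))
    (fun d _ => by positivity) h0
  simpa using this

lemma pgt_choose (hl : 0 < lam) (d : ℕ) (hd : d ∈ range (n + 1)) :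
    (n.choose d : ℝ) * ((Real.exp lam / ∑ e ∈ range (n + 1), lam ^ e / e.factorial) *
      lam ^ d * Real.exp (-lam) * (n - d).factorial / n.factorial)
    = (lam ^ d / d.factorial) / (∑ e ∈ range (n + 1), lam ^ e / e.factorial) := by
  have hZ : (0:ℝ) < ∑ e ∈ range (n + 1), lam ^ e / e.factorial :=
    lt_of_lt_of_le one_pos (Z_ge_one hl.le)
  have hee : Real.exp lam * Real.exp (-lam) = 1 := by
    rw [← Real.exp_add]; simp
  have hcf := choose_factorial_div d (by simpa using Nat.lt_succ_iff.mp (mem_range.mp hd))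
  calc (n.choose d : ℝ) * ((Real.exp lam / ∑ e ∈ range (n + 1), lam ^ e / e.factorial) *
      lam ^ d * Real.exp (-lam) * (n - d).factorial / n.factorial)
      = (Real.exp lam * Real.exp (-lam)) *
          ((n.choose d : ℝ) * (n - d).factorial / n.factorial) * lam ^ d /
          (∑ e ∈ range (n + 1), lam ^ e / e.factorial) := by ring
    _ = (lam ^ d / d.factorial) / (∑ e ∈ range (n + 1), lam ^ e / e.factorial) := by
        rw [hee, hcf]; ring

lemma sum_pgt (hl : 0 < lam) : ∑ S : Finset (Fin n), pgtWeight n lam S = 1 := by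
  have hZ : (0:ℝ) < ∑ e ∈ range (n + 1), lam ^ e / e.factorial :=
    lt_of_lt_of_le one_pos (Z_ge_one hl.le)
  unfold pgtWeight
  rw [sum_finset_card (fun d => (Real.exp lam / ∑ e ∈ range (n + 1), lam ^ e / e.factorial) *
      lam ^ d * Real.exp (-lam) * (n - d).factorial / n.factorial)]
  rw [Finset.sum_congr rfl (fun d hd => pgt_choose hl d hd), ← Finset.sum_div]
  field_simp

lemma pgt_nonneg (hl : 0 < lam) (S : Finset (Fin n)) : 0 ≤ pgtWeight n lam S := by
  have hZ : (0:ℝ) < ∑ e ∈ range (n + 1), lam ^ e / e.factorial :=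
    lt_of_lt_of_le one_pos (Z_ge_one hl.le)
  unfold pgtWeight
  positivity

lemma tail_pgt (hl : 0 < lam) (B : ℕ) :
    ∑ S : Finset (Fin n), pgtWeight n lam S * (if B < S.card then 1 else 0)
      ≤ ∑ d ∈ (range (n + 1)).filter (fun d => B < d), lam ^ d / d.factorial := by
  have hZ1 : (1:ℝ) ≤ ∑ e ∈ range (n + 1), lam ^ e / e.factorial := Z_ge_one hl.le
  have hZ : (0:ℝ) < ∑ e ∈ range (n + 1), lam ^ e / e.factorial := lt_of_lt_of_le one_pos hZ1
  have hrw : ∑ S : Finset (Fin n), pgtWeight n lam S * (if B < S.card then 1 else 0)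
      = ∑ d ∈ range (n + 1), ((lam ^ d / d.factorial) /
          (∑ e ∈ range (n + 1), lam ^ e / e.factorial)) * (if B < d then 1 else 0) := by
    unfold pgtWeight
    rw [sum_finset_card (fun d => (Real.exp lam / ∑ e ∈ range (n + 1), lam ^ e / e.factorial) *
        lam ^ d * Real.exp (-lam) * (n - d).factorial / n.factorial * (if B < d then 1 else 0))]
    refine Finset.sum_congr rfl (fun d hd => ?_)
    rw [← mul_assoc, pgt_choose hl d hd]
  rw [hrw]
  simp only [mul_ite, mul_one, mul_zero]
  rw [← Finset.sum_filter]
  refine Finset.sum_le_sum (fun d _ => ?_)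
  have h1 : 0 ≤ lam ^ d / (d.factorial : ℝ) := by positivity
  calc (lam ^ d / d.factorial) / (∑ e ∈ range (n + 1), lam ^ e / e.factorial)
      ≤ (lam ^ d / d.factorial) / 1 := by
        apply div_le_div_of_nonneg_left h1 one_pos hZ1
    _ = lam ^ d / d.factorial := by rw [div_one]



section E
variable {mn n : ℕ} {p : ℝ}

lemma E_le_one (h0 : 0 ≤ p) (h1 : p ≤ 1) (S : Finset (Fin n)) :
    ∑ C : Fin mn → Fin n → Bool,
      bernWeight p C * (if coverDecoder C (outcome C S) ≠ S then (1:ℝ) else 0) ≤ 1 := by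
  calc ∑ C : Fin mn → Fin n → Bool,
      bernWeight p C * (if coverDecoder C (outcome C S) ≠ S then (1:ℝ) else 0)
      ≤ ∑ C : Fin mn → Fin n → Bool, bernWeight p C := by
        refine Finset.sum_le_sum (fun C _ => ?_)
        have hb := bernWeight_nonneg h0 h1 C
        split <;> simp <;> linarith
    _ = 1 := sum_bernWeight

lemma E_le_union (h0 : 0 ≤ p) (h1 : p ≤ 1) (S : Finset (Fin n)) :
    ∑ C : Fin mn → Fin n → Bool,
      bernWeight p C * (if coverDecoder C (outcome C S) ≠ S then (1:ℝ) else 0)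
      ≤ (n : ℝ) * (1 - p * (1 - p) ^ S.card) ^ mn := by
  have hq0 : 0 ≤ 1 - p * (1 - p) ^ S.card := by
    have h2 : (1 - p) ^ S.card ≤ 1 := pow_le_one₀ (by linarith) (by linarith)
    have h3 : 0 ≤ (1 - p) ^ S.card := pow_nonneg (by linarith) _
    nlinarith
  have hstep : ∀ C : Fin mn → Fin n → Bool,
      bernWeight p C * (if coverDecoder C (outcome C S) ≠ S then (1:ℝ) else 0)
      ≤ ∑ i ∈ univ \ S,
          bernWeight p C * (if i ∈ coverDecoder C (outcome C S) then (1:ℝ) else 0) := by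
    intro C
    have hb := bernWeight_nonneg h0 h1 C
    by_cases h : coverDecoder C (outcome C S) ≠ S
    · rw [if_pos h, mul_one]
      have hsub := subset_coverDecoder C S
      have : ∃ i, i ∈ coverDecoder C (outcome C S) ∧ i ∉ S := by
        by_contra hc
        push_neg at hc
        exact h (Finset.Subset.antisymm (fun i hi => hc i hi) hsub)
      obtain ⟨i, hi1, hi2⟩ := this
      have hmem : i ∈ univ \ S := by simp [hi2]
      have := Finset.single_le_sum (f := fun i => bernWeight p C *
          (if i ∈ coverDecoder C (outcome C S) then (1:ℝ) else 0))
        (fun i _ => by split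
                       · simpa using hb
                       · simp) hmem
      rw [if_pos hi1, mul_one] at this
      exact this
    · rw [if_neg h, mul_zero]
      refine Finset.sum_nonneg (fun i _ => ?_)
      split
      · simpa using hb
      · simp
  calc ∑ C : Fin mn → Fin n → Bool,
      bernWeight p C * (if coverDecoder C (outcome C S) ≠ S then (1:ℝ) else 0)
      ≤ ∑ C : Fin mn → Fin n → Bool, ∑ i ∈ univ \ S,
          bernWeight p C * (if i ∈ coverDecoder C (outcome C S) then (1:ℝ) else 0) :=
        Finset.sum_le_sum (fun C _ => hstep C)
    _ = ∑ i ∈ univ \ S, ∑ C : Fin mn → Fin n → Bool,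
          bernWeight p C * (if i ∈ coverDecoder C (outcome C S) then (1:ℝ) else 0) :=
        Finset.sum_comm
    _ = ∑ i ∈ univ \ S, (1 - p * (1 - p) ^ S.card) ^ mn := by
        refine Finset.sum_congr rfl (fun i hi => ?_)
        exact cover_prob h0 h1 S (Finset.mem_sdiff.mp hi).2
    _ = ((univ \ S).card : ℝ) * (1 - p * (1 - p) ^ S.card) ^ mn := by
        rw [Finset.sum_const, nsmul_eq_mul]
    _ ≤ (n : ℝ) * (1 - p * (1 - p) ^ S.card) ^ mn := by
        apply mul_le_mul_of_nonneg_right _ (pow_nonneg hq0 mn)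
        have : (univ \ S).card ≤ n := by
          calc (univ \ S).card ≤ (univ : Finset (Fin n)).card := Finset.card_le_card (by simp)
            _ = n := by simp
        exact_mod_cast this

end E

lemma master (n mn B : ℕ) (lam p : ℝ) (hl : 0 < lam) (h0 : 0 ≤ p) (h1 : p ≤ 1) :
    errProbCover n mn lam p ≤ (n : ℝ) * (1 - p * (1 - p) ^ B) ^ mn
      + ∑ d ∈ (range (n + 1)).filter (fun d => B < d), lam ^ d / d.factorial := by
  have hp1 : 0 ≤ 1 - p := by linarith
  have hqB : 0 ≤ 1 - p * (1 - p) ^ B := by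
    have h2 : (1 - p) ^ B ≤ 1 := pow_le_one₀ hp1 (by linarith)
    have h3 : 0 ≤ (1 - p) ^ B := pow_nonneg hp1 _
    nlinarith
  have hrw : errProbCover n mn lam p = ∑ S : Finset (Fin n), pgtWeight n lam S *
      (∑ C : Fin mn → Fin n → Bool,
        bernWeight p C * (if coverDecoder C (outcome C S) ≠ S then (1:ℝ) else 0)) := by
    rw [errProbCover, Finset.sum_comm]
    refine Finset.sum_congr rfl (fun S _ => ?_)
    rw [Finset.mul_sum]
    refine Finset.sum_congr rfl (fun C _ => ?_)
    ring
  rw [hrw, ← Finset.sum_filter_add_sum_filter_not univ (fun S => S.card ≤ B)]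
  have hhead : ∑ S ∈ univ.filter (fun S : Finset (Fin n) => S.card ≤ B), pgtWeight n lam S *
      (∑ C : Fin mn → Fin n → Bool,
        bernWeight p C * (if coverDecoder C (outcome C S) ≠ S then (1:ℝ) else 0))
      ≤ (n : ℝ) * (1 - p * (1 - p) ^ B) ^ mn := by
    have hc : 0 ≤ (n : ℝ) * (1 - p * (1 - p) ^ B) ^ mn := by positivity
    calc ∑ S ∈ univ.filter (fun S : Finset (Fin n) => S.card ≤ B), pgtWeight n lam S *
        (∑ C : Fin mn → Fin n → Bool,
          bernWeight p C * (if coverDecoder C (outcome C S) ≠ S then (1:ℝ) else 0))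
        ≤ ∑ S ∈ univ.filter (fun S : Finset (Fin n) => S.card ≤ B), pgtWeight n lam S *
            ((n : ℝ) * (1 - p * (1 - p) ^ B) ^ mn) := by
          refine Finset.sum_le_sum (fun S hS => ?_)
          have hcard : S.card ≤ B := (Finset.mem_filter.mp hS).2
          refine mul_le_mul_of_nonneg_left ?_ (pgt_nonneg hl S)
          calc (∑ C : Fin mn → Fin n → Bool,
              bernWeight p C * (if coverDecoder C (outcome C S) ≠ S then (1:ℝ) else 0))
              ≤ (n : ℝ) * (1 - p * (1 - p) ^ S.card) ^ mn := E_le_union h0 h1 S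
            _ ≤ (n : ℝ) * (1 - p * (1 - p) ^ B) ^ mn := by
                refine mul_le_mul_of_nonneg_left ?_ (Nat.cast_nonneg n)
                refine pow_le_pow_left₀ ?_ ?_ mn
                · have h2 : (1 - p) ^ S.card ≤ 1 := pow_le_one₀ hp1 (by linarith)
                  have h3 : 0 ≤ (1 - p) ^ S.card := pow_nonneg hp1 _
                  nlinarith
                · have := pow_le_pow_of_le_one hp1 (by linarith : 1 - p ≤ 1) hcard
                  nlinarith [this, h0]
      _ = ((n : ℝ) * (1 - p * (1 - p) ^ B) ^ mn) *
            ∑ S ∈ univ.filter (fun S : Finset (Fin n) => S.card ≤ B), pgtWeight n lam S := by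
          rw [Finset.mul_sum]
          exact Finset.sum_congr rfl (fun S _ => mul_comm _ _)
      _ ≤ ((n : ℝ) * (1 - p * (1 - p) ^ B) ^ mn) * 1 := by
          refine mul_le_mul_of_nonneg_left ?_ hc
          rw [← sum_pgt (n := n) hl]
          exact Finset.sum_le_sum_of_subset_of_nonneg (Finset.filter_subset _ _)
            (fun S _ _ => pgt_nonneg hl S)
      _ = (n : ℝ) * (1 - p * (1 - p) ^ B) ^ mn := mul_one _
  have htail : ∑ S ∈ univ.filter (fun S : Finset (Fin n) => ¬ S.card ≤ B), pgtWeight n lam S *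
      (∑ C : Fin mn → Fin n → Bool,
        bernWeight p C * (if coverDecoder C (outcome C S) ≠ S then (1:ℝ) else 0))
      ≤ ∑ d ∈ (range (n + 1)).filter (fun d => B < d), lam ^ d / d.factorial := by
    calc ∑ S ∈ univ.filter (fun S : Finset (Fin n) => ¬ S.card ≤ B), pgtWeight n lam S *
        (∑ C : Fin mn → Fin n → Bool,
          bernWeight p C * (if coverDecoder C (outcome C S) ≠ S then (1:ℝ) else 0))
        ≤ ∑ S ∈ univ.filter (fun S : Finset (Fin n) => ¬ S.card ≤ B), pgtWeight n lam S := by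
          refine Finset.sum_le_sum (fun S _ => ?_)
          calc pgtWeight n lam S * (∑ C : Fin mn → Fin n → Bool,
              bernWeight p C * (if coverDecoder C (outcome C S) ≠ S then (1:ℝ) else 0))
              ≤ pgtWeight n lam S * 1 :=
                mul_le_mul_of_nonneg_left (E_le_one h0 h1 S) (pgt_nonneg hl S)
            _ = pgtWeight n lam S := mul_one _
      _ = ∑ S : Finset (Fin n), pgtWeight n lam S * (if B < S.card then 1 else 0) := by
          simp only [mul_ite, mul_one, mul_zero]
          rw [← Finset.sum_filter]
          apply Finset.sum_congr _ (fun _ _ => rfl)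
          apply Finset.filter_congr
          intro S _
          simp [not_le]
      _ ≤ ∑ d ∈ (range (n + 1)).filter (fun d => B < d), lam ^ d / d.factorial :=
          tail_pgt hl B
  linarith

lemma errProb_nonneg (n mn : ℕ) (lam p : ℝ) (hl : 0 < lam) (h0 : 0 ≤ p) (h1 : p ≤ 1) :
    0 ≤ errProbCover n mn lam p := by
  apply Finset.sum_nonneg; intro C _
  apply Finset.sum_nonneg; intro S _
  have hb := bernWeight_nonneg h0 h1 C
  have hg := pgt_nonneg hl S
  have hi : (0:ℝ) ≤ if coverDecoder C (outcome C S) ≠ S then 1 else 0 := by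
    split <;> norm_num
  exact mul_nonneg (mul_nonneg hb hg) hi

lemma tendsto_iterLog (K : ℕ) : Tendsto (iterLog K) atTop atTop := by
  induction K with
  | zero => exact tendsto_id
  | succ K ih => exact Real.tendsto_log_atTop.comp ih

set_option maxHeartbeats 1000000 in
theorem stmt2 (lam : ℕ → ℝ) (hpos : ∀ n, 0 < lam n)
    (hlamo : Tendsto (fun n => lam n / n) atTop (nhds 0))
    (hlamlim : ∃ L : ℝ, 0 < L ∧ Tendsto lam atTop (nhds L))
    (K : ℕ) (hK : 1 < K)
    (β : ℕ → ℝ) (hβ : ∀ n, β n = iterLog K n)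
    (p : ℕ → ℝ) (hp : ∀ n, p n = 1 / (⌈β n * lam n⌉₊ : ℝ))
    (m : ℕ → ℕ)
    (hm : ∀ n, m n = ⌈Real.exp 1 * (⌈β n * lam n⌉₊ : ℝ) ^ 2 * Real.log n⌉₊) :
    Tendsto (fun n => errProbCover n (m n) (lam n) (p n)) atTop (nhds 0) := by
  obtain ⟨L, hL, hlim⟩ := hlamlim
  set M : ℝ := L + 1 with hM
  have hM0 : 0 < M := by linarith
  set B : ℕ → ℕ := fun n => ⌈β n * lam n⌉₊ with hB
  -- B tends to atTop
  have hβt : Tendsto β atTop atTop := by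
    have : Tendsto (fun n : ℕ => iterLog K n) atTop atTop :=
      (tendsto_iterLog K).comp tendsto_natCast_atTop_atTop
    exact this.congr (fun n => (hβ n).symm)
  have hbl : Tendsto (fun n => β n * lam n) atTop atTop := hβt.atTop_mul_pos hL hlim
  have hBR : Tendsto (fun n => (B n : ℝ)) atTop atTop :=
    tendsto_atTop_mono (fun n => Nat.le_ceil _) hbl
  have hBt : Tendsto B atTop atTop := tendsto_natCast_atTop_iff.mp hBR
  -- the dominating sequence
  set g : ℕ → ℝ := fun n => (n : ℝ)⁻¹ +
    (Real.exp M - ∑ d ∈ range (B n + 1), M ^ d / d.factorial) with hg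
  have hgto : Tendsto g atTop (nhds 0) := by
    have h1 : Tendsto (fun n : ℕ => (n : ℝ)⁻¹) atTop (nhds 0) :=
      tendsto_inv_atTop_nhds_zero_nat
    have hpart : Tendsto (fun k => ∑ d ∈ range k, M ^ d / d.factorial) atTop
        (nhds (Real.exp M)) := by
      rw [Real.exp_eq_exp_ℝ]
      exact (NormedSpace.expSeries_div_hasSum_exp M).tendsto_sum_nat
    have h2 : Tendsto (fun k => Real.exp M - ∑ d ∈ range k, M ^ d / d.factorial) atTop
        (nhds 0) := by
      have := tendsto_const_nhds (f := atTop (α := ℕ)) (x := Real.exp M) |>.sub hpart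
      simpa using this
    have h3 : Tendsto (fun n => B n + 1) atTop atTop :=
      tendsto_atTop_mono (fun n => Nat.le_add_right (B n) 1) hBt
    have := h1.add (h2.comp h3)
    simpa using this
  -- eventual hypotheses
  have hev : ∀ᶠ n : ℕ in atTop, lam n ≤ M ∧ 4 ≤ B n ∧ 3 ≤ n := by
    filter_upwards [hlim.eventually_le_const (by linarith : L < M),
      hBt.eventually_ge_atTop 4, eventually_ge_atTop 3] with n h1 h2 h3
    exact ⟨h1, h2, h3⟩
  refine squeeze_zero' ?_ ?_ hgto
  · filter_upwards [hev] with n ⟨hlM, hB4, hn3⟩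
    have hb1 : (1:ℝ) ≤ (B n : ℝ) := by exact_mod_cast le_trans (by norm_num) hB4
    refine errProb_nonneg _ _ _ _ (hpos n) ?_ ?_
    · rw [hp]; positivity
    · rw [hp]; rw [div_le_one (by linarith)]; exact hb1
  · filter_upwards [hev] with n ⟨hlM, hB4, hn3⟩
    set b : ℕ := B n with hbdef
    have hbB : b = ⌈β n * lam n⌉₊ := by rw [hbdef, hB]
    clear_value b
    have hbR : (4:ℝ) ≤ (b : ℝ) := by exact_mod_cast hB4
    have hb0 : (0:ℝ) < (b : ℝ) := by linarith
    have hpn : p n = 1 / (b : ℝ) := by rw [hp n, ← hbB]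
    have h0 : 0 ≤ p n := by rw [hpn]; positivity
    have h1 : p n ≤ 1 := by rw [hpn, div_le_one hb0]; linarith
    have hmaster := master n (m n) b (lam n) (p n) (hpos n) h0 h1
    -- head bound
    have hn1 : (1:ℝ) ≤ (n:ℝ) := by exact_mod_cast le_trans (by norm_num) hn3
    have hlogn : 0 ≤ Real.log n := Real.log_nonneg hn1
    have hlogn1 : 1 ≤ Real.log n := by
      have : Real.exp 1 ≤ (n : ℝ) := by
        calc Real.exp 1 ≤ 2.7182818286 := Real.exp_one_lt_d9.le
          _ ≤ 3 := by norm_num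
          _ ≤ (n : ℝ) := by exact_mod_cast hn3
      calc (1:ℝ) = Real.log (Real.exp 1) := (Real.log_exp 1).symm
        _ ≤ Real.log n := Real.log_le_log (Real.exp_pos 1) this
    -- (1 - 1/b)^b ≥ exp(-3/2)
    have hkey : Real.exp (-(3/2)) ≤ (1 - 1/(b:ℝ)) ^ b := by
      have hx : Real.exp (-(3/(2*(b:ℝ)))) ≤ 1 - 1/(b:ℝ) := by
        have hu0 : 0 < 1/(b:ℝ) := by positivity
        have hu4 : 1/(b:ℝ) ≤ 1/4 := by
          apply one_div_le_one_div_of_le (by norm_num) hbR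
        have he := Real.add_one_le_exp (3/(2*(b:ℝ)))
        have hprod : Real.exp (-(3/(2*(b:ℝ)))) * Real.exp (3/(2*(b:ℝ))) = 1 := by
          rw [← Real.exp_add]; simp
        have h32 : (3:ℝ)/(2*(b:ℝ)) = (3/2)*(1/(b:ℝ)) := by ring
        have h1b : 1 ≤ (1 - 1/(b:ℝ)) * Real.exp (3/(2*(b:ℝ))) := by
          have hmul := mul_le_mul_of_nonneg_left he (by linarith : (0:ℝ) ≤ 1 - 1/(b:ℝ))
          nlinarith [hmul, hu0, hu4]
        calc Real.exp (-(3/(2*(b:ℝ)))) = Real.exp (-(3/(2*(b:ℝ)))) * 1 := (mul_one _).symm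
          _ ≤ Real.exp (-(3/(2*(b:ℝ)))) * ((1 - 1/(b:ℝ)) * Real.exp (3/(2*(b:ℝ)))) :=
              mul_le_mul_of_nonneg_left h1b (Real.exp_pos _).le
          _ = 1 - 1/(b:ℝ) := by
              rw [mul_comm (1 - 1/(b:ℝ)) _, ← mul_assoc, hprod, one_mul]
      calc Real.exp (-(3/2)) = Real.exp (-(3/(2*(b:ℝ)))) ^ b := by
            rw [← Real.exp_nat_mul]
            congr 1
            field_simp
        _ ≤ (1 - 1/(b:ℝ)) ^ b := pow_le_pow_left₀ (Real.exp_pos _).le hx b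
    -- q lower bound
    set q : ℝ := p n * (1 - p n) ^ b with hq
    have hexphalf : Real.exp (1/2) ≤ 2 := by
      have := Real.log_two_gt_d9
      calc Real.exp (1/2) ≤ Real.exp (Real.log 2) := Real.exp_le_exp.mpr (by linarith)
        _ = 2 := Real.exp_log (by norm_num)
    have hqlow : 1 / (2 * Real.exp 1 * (b:ℝ)) ≤ q := by
      have e1 : Real.exp (-(3/2)) * (2 * Real.exp 1) ≥ 1 := by
        have h2 : Real.exp (-(3/2)) * Real.exp 1 = Real.exp (-(1/2)) := by
          rw [← Real.exp_add]; norm_num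
        have h3 : Real.exp (-(1/2)) * Real.exp (1/2) = 1 := by
          rw [← Real.exp_add]; norm_num
        nlinarith [Real.exp_pos (-(1/2)), Real.exp_pos (1/2), hexphalf]
      rw [hq, hpn]
      rw [div_le_iff₀ (by positivity)]
      have : (1:ℝ) / (b:ℝ) * (1 - 1/(b:ℝ))^b * (2 * Real.exp 1 * (b:ℝ))
          = (1 - 1/(b:ℝ))^b * (2 * Real.exp 1) := by
        field_simp
      rw [this]
      calc (1:ℝ) ≤ Real.exp (-(3/2)) * (2 * Real.exp 1) := e1
        _ ≤ (1 - 1/(b:ℝ))^b * (2 * Real.exp 1) := by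
            apply mul_le_mul_of_nonneg_right hkey
            positivity
    have hq0 : 0 ≤ q := le_trans (by positivity) hqlow
    have hq1 : q ≤ 1 := by
      rw [hq]
      have : (1 - p n) ^ b ≤ 1 := pow_le_one₀ (by linarith) (by linarith)
      nlinarith
    -- m n ≥ e b^2 log n
    have hmn : Real.exp 1 * (b:ℝ)^2 * Real.log n ≤ (m n : ℝ) := by
      rw [hm, hbB]; exact Nat.le_ceil _
    -- q * m n ≥ 2 log n
    have hqm : 2 * Real.log n ≤ q * (m n : ℝ) := by
      have step1 : 1 / (2 * Real.exp 1 * (b:ℝ)) * (Real.exp 1 * (b:ℝ)^2 * Real.log n)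
          = (b:ℝ) / 2 * Real.log n := by
        field_simp
      have step2 : 1 / (2 * Real.exp 1 * (b:ℝ)) * (Real.exp 1 * (b:ℝ)^2 * Real.log n) ≤
          q * (m n : ℝ) := by
        apply mul_le_mul hqlow hmn (mul_nonneg (by positivity) hlogn) hq0
      rw [step1] at step2
      calc 2 * Real.log n ≤ (b:ℝ)/2 * Real.log n :=
            mul_le_mul_of_nonneg_right (by linarith) hlogn
        _ ≤ q * (m n : ℝ) := step2
    -- head term ≤ 1/n
    have hhead : (n : ℝ) * (1 - q) ^ (m n) ≤ (n:ℝ)⁻¹ := by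
      have hle : (1 - q) ^ (m n) ≤ Real.exp (-(q * (m n : ℝ))) := by
        calc (1 - q) ^ (m n) ≤ Real.exp (-q) ^ (m n) := by
              apply pow_le_pow_left₀ (by linarith)
              have := Real.add_one_le_exp (-q)
              linarith
          _ = Real.exp (-(q * (m n : ℝ))) := by
              rw [← Real.exp_nat_mul]
              congr 1
              ring
      have hle2 : Real.exp (-(q * (m n:ℝ))) ≤ Real.exp (-(2 * Real.log n)) :=
        Real.exp_le_exp.mpr (by linarith)
      have hexp2 : Real.exp (-(2 * Real.log n)) = ((n:ℝ) * (n:ℝ))⁻¹ := by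
        rw [← Real.exp_log (show (0:ℝ) < (n:ℝ)*(n:ℝ) by positivity), ← Real.exp_neg]
        congr 1
        rw [Real.log_mul (by linarith) (by linarith)]
        ring
      calc (n:ℝ) * (1 - q) ^ (m n) ≤ (n:ℝ) * ((n:ℝ) * (n:ℝ))⁻¹ := by
            apply mul_le_mul_of_nonneg_left _ (by linarith)
            calc (1 - q) ^ (m n) ≤ Real.exp (-(2 * Real.log n)) := le_trans hle hle2
              _ = ((n:ℝ) * (n:ℝ))⁻¹ := hexp2
        _ = (n:ℝ)⁻¹ := by
            field_simp
      -- done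
    -- tail bound
    have htail : ∑ d ∈ (range (n + 1)).filter (fun d => b < d), lam n ^ d / d.factorial
        ≤ Real.exp M - ∑ d ∈ range (b + 1), M ^ d / d.factorial := by
      have t1 : ∑ d ∈ (range (n + 1)).filter (fun d => b < d), lam n ^ d / d.factorial
          ≤ ∑ d ∈ (range (n + 1)).filter (fun d => b < d), M ^ d / d.factorial := by
        refine Finset.sum_le_sum (fun d _ => ?_)
        have hfac : (0:ℝ) < (d.factorial : ℝ) := by exact_mod_cast Nat.factorial_pos d
        exact div_le_div_of_nonneg_right (pow_le_pow_left₀ (hpos n).le hlM d) hfac.le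
      have hsub : (range (n + 1)).filter (fun d => b < d) ⊆
          range (n + b + 2) \ range (b + 1) := by
        intro d hd
        obtain ⟨hd1, hd2⟩ := Finset.mem_filter.mp hd
        rw [Finset.mem_range] at hd1
        simp only [Finset.mem_sdiff, Finset.mem_range]
        omega
      have t2 : ∑ d ∈ (range (n + 1)).filter (fun d => b < d), M ^ d / d.factorial
          ≤ ∑ d ∈ range (n + b + 2) \ range (b + 1), M ^ d / d.factorial := by
        apply Finset.sum_le_sum_of_subset_of_nonneg hsub
        intro d _ _
        positivity
      have t3 : ∑ d ∈ range (n + b + 2) \ range (b + 1), M ^ d / d.factorial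
          = ∑ d ∈ range (n + b + 2), M ^ d / d.factorial
            - ∑ d ∈ range (b + 1), M ^ d / d.factorial := by
        apply Finset.sum_sdiff_eq_sub
        apply Finset.range_subset_range.mpr
        omega
      have t4 : ∑ d ∈ range (n + b + 2), M ^ d / d.factorial ≤ Real.exp M :=
        Real.sum_le_exp_of_nonneg hM0.le _
      rw [t3] at t2
      linarith
    calc errProbCover n (m n) (lam n) (p n)
        ≤ (n : ℝ) * (1 - q) ^ (m n)
          + ∑ d ∈ (range (n + 1)).filter (fun d => b < d), lam n ^ d / d.factorial := by
          exact hmaster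
        _ ≤ g n := by
          rw [hg]
          dsimp only
          rw [← hbdef]
          have := add_le_add hhead htail
          linarith
end Pgt
end

section
/- Let λ : ℕ → (0,∞) satisfy λ(n) = o(n) and lim_{n→∞} λ(n) = ∞, and fix an arbitrarily small ε > 0. Then there exist a sequence m(n) of test numbers with m(n) ≤ (3/log₂ 3)·λ(n)^{1+ε}·log₂ n·(1+o(1)), probability distributions μ_n on the set of m(n)×n binary test matrices, and decoders g_n : {0,1}^{m(n)×n} × {0,1}^{m(n)} → 2^{{1,…,n}} such that, with C_n drawn from μ_n independently of the defective set 𝒟_n of the Poisson PGT model on n subjects with parameter λ(n), and y_n the outcome vector, the error probability P(g_n(C_n, y_n) ≠ 𝒟_n) tends to 0 as n → ∞. -/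
open Filter Finset

set_option linter.unusedVariables false


lemma sum_prod_eq {ι κ : Type*} [Fintype ι] [Fintype κ] [DecidableEq ι] (F : ι → κ → ℝ) :
    ∑ f : ι → κ, ∏ i, F i (f i) = ∏ i, ∑ x : κ, F i x :=
  (Fintype.prod_sum F).symm

lemma ind_forall_prod {ι : Type*} [Fintype ι] (P : ι → Prop) [DecidablePred P] :
    (if (∀ i, P i) then (1:ℝ) else 0) = ∏ i, if P i then (1:ℝ) else 0 := by
  by_cases h : ∀ i, P i
  · simp [h]
  · push_neg at h
    obtain ⟨i, hi⟩ := h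
    rw [if_neg (by push_neg; exact ⟨i, hi⟩)]
    exact (Finset.prod_eq_zero (mem_univ i) (by simp [hi])).symm

lemma sum_rowW {ι : Type*} [Fintype ι] [DecidableEq ι] (p : ℝ) :
    ∑ r : ι → Bool, ∏ i, (if r i then p else 1 - p) = 1 := by
  rw [sum_prod_eq (fun (i : ι) (x : Bool) => if x = true then p else 1 - p)]
  simp

lemma row_lemma {ι : Type*} [Fintype ι] [DecidableEq ι] (p : ℝ) (S : Finset ι) (i₀ : ι)
    (hi₀ : i₀ ∉ S) :
    ∑ r : ι → Bool, (∏ i, (if r i then p else 1 - p)) *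
      (if (r i₀ = true → ∃ i' ∈ S, r i' = true) then (1:ℝ) else 0)
      = 1 - p * (1 - p) ^ S.card := by
  have key : ∑ r : ι → Bool, (∏ i, (if r i then p else 1 - p)) *
      (if (r i₀ = true ∧ ∀ i' ∈ S, r i' = false) then (1:ℝ) else 0)
      = p * (1 - p) ^ S.card := by
    have hfac : ∀ r : ι → Bool,
        (if (r i₀ = true ∧ ∀ i' ∈ S, r i' = false) then (1:ℝ) else 0) =
        ∏ i, (if i = i₀ then (if r i then (1:ℝ) else 0)
              else if i ∈ S then (if r i then 0 else 1) else 1) := by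
      intro r
      by_cases h : r i₀ = true ∧ ∀ i' ∈ S, r i' = false
      · rw [if_pos h]
        refine (Finset.prod_eq_one fun i _ => ?_).symm
        by_cases h1 : i = i₀
        · simp [h1, h.1]
        · by_cases h2 : i ∈ S
          · simp [h1, h2, h.2 i h2]
          · simp [h1, h2]
      · rw [if_neg h]
        push_neg at h
        by_cases h0 : r i₀ = true
        · obtain ⟨i, hiS, hir⟩ := h h0
          refine (Finset.prod_eq_zero (mem_univ i) ?_).symm
          have : i ≠ i₀ := fun he => hi₀ (by rw [← he]; exact hiS)
          simp only [Bool.not_eq_false] at hir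
          simp [this, hiS, hir]
        · refine (Finset.prod_eq_zero (mem_univ i₀) ?_).symm
          simp only [Bool.not_eq_true] at h0
          simp [h0]
    calc ∑ r : ι → Bool, (∏ i, (if r i then p else 1 - p)) *
          (if (r i₀ = true ∧ ∀ i' ∈ S, r i' = false) then (1:ℝ) else 0)
        = ∑ r : ι → Bool, ∏ i, ((if r i then p else 1 - p) *
            (if i = i₀ then (if r i then (1:ℝ) else 0)
              else if i ∈ S then (if r i then 0 else 1) else 1)) := by
          refine Finset.sum_congr rfl fun r _ => ?_
          rw [hfac r, ← Finset.prod_mul_distrib]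
      _ = ∏ i, ∑ x : Bool, ((if x then p else 1 - p) *
            (if i = i₀ then (if x then (1:ℝ) else 0)
              else if i ∈ S then (if x then 0 else 1) else 1)) := by
          exact sum_prod_eq (fun (i : ι) (x : Bool) => (if x = true then p else 1 - p) *
            (if i = i₀ then (if x = true then (1:ℝ) else 0)
              else if i ∈ S then (if x = true then 0 else 1) else 1))
      _ = ∏ i, (if i = i₀ then p else if i ∈ S then 1 - p else 1) := by
          refine Finset.prod_congr rfl fun i _ => ?_
          by_cases h1 : i = i₀ <;> by_cases h2 : i ∈ S <;> simp [h1, h2]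
      _ = p * (1 - p) ^ S.card := by
          rw [← Finset.mul_prod_erase univ _ (mem_univ i₀)]
          rw [if_pos rfl]
          congr 1
          have : ∀ i ∈ univ.erase i₀, (if i = i₀ then p else if i ∈ S then 1 - p else 1)
              = (if i ∈ S then 1 - p else 1) := by
            intro i hi
            rw [if_neg (Finset.mem_erase.1 hi).1]
          rw [Finset.prod_congr rfl this, Finset.prod_ite_mem,
            Finset.inter_eq_right.2 (fun i hiS => Finset.mem_erase.2
              ⟨fun he => hi₀ (by rw [← he]; exact hiS), mem_univ i⟩), Finset.prod_const]
  have hsplit : ∀ r : ι → Bool,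
      (if (r i₀ = true → ∃ i' ∈ S, r i' = true) then (1:ℝ) else 0) =
      1 - (if (r i₀ = true ∧ ∀ i' ∈ S, r i' = false) then (1:ℝ) else 0) := by
    intro r
    by_cases h : r i₀ = true ∧ ∀ i' ∈ S, r i' = false
    · rw [if_pos h, if_neg]
      · norm_num
      · rintro hcon
        obtain ⟨i, hiS, hir⟩ := hcon h.1
        rw [h.2 i hiS] at hir
        exact Bool.false_ne_true hir
    · rw [if_neg h, if_pos]
      · norm_num
      · intro h0
        by_contra hno
        push_neg at hno
        exact h ⟨h0, fun i' hi' => by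
          have := hno i' hi'
          simpa using this⟩
  simp_rw [hsplit, mul_sub, mul_one, Finset.sum_sub_distrib, sum_rowW, key]

noncomputable def matW (m n : ℕ) (p : ℝ) (C : Fin m → Fin n → Bool) : ℝ :=
  ∏ j, ∏ i, (if C j i then p else 1 - p)

lemma matW_nonneg {m n : ℕ} {p : ℝ} (h0 : 0 ≤ p) (h1 : p ≤ 1) (C : Fin m → Fin n → Bool) :
    0 ≤ matW m n p C := by
  refine Finset.prod_nonneg fun j _ => Finset.prod_nonneg fun i _ => ?_
  by_cases h : C j i <;> simp [h] <;> linarith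

lemma matW_sum (m n : ℕ) (p : ℝ) : ∑ C : Fin m → Fin n → Bool, matW m n p C = 1 := by
  unfold matW
  rw [sum_prod_eq (fun (j : Fin m) (r : Fin n → Bool) => ∏ i, (if r i = true then p else 1 - p))]
  simp [sum_rowW]

lemma matW_hidden (m n : ℕ) (p : ℝ) (S : Finset (Fin n)) (i₀ : Fin n) (hi₀ : i₀ ∉ S) :
    ∑ C : Fin m → Fin n → Bool, matW m n p C *
      (if (∀ j, C j i₀ = true → ∃ i' ∈ S, C j i' = true) then (1:ℝ) else 0)
      = (1 - p * (1 - p) ^ S.card) ^ m := by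
  have : ∀ C : Fin m → Fin n → Bool, matW m n p C *
      (if (∀ j, C j i₀ = true → ∃ i' ∈ S, C j i' = true) then (1:ℝ) else 0)
      = ∏ j, ((∏ i, (if C j i then p else 1 - p)) *
          (if (C j i₀ = true → ∃ i' ∈ S, C j i' = true) then (1:ℝ) else 0)) := by
    intro C
    rw [Finset.prod_mul_distrib, ← ind_forall_prod (fun j => C j i₀ = true → ∃ i' ∈ S, C j i' = true)]
    unfold matW
    congr 1
    by_cases h : ∀ j, C j i₀ = true → ∃ i' ∈ S, C j i' = true <;> simp [h]
  simp_rw [this]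
  rw [sum_prod_eq (fun (j : Fin m) (r : Fin n → Bool) =>
    (∏ i, (if r i = true then p else 1 - p)) *
      (if (r i₀ = true → ∃ i' ∈ S, r i' = true) then (1:ℝ) else 0))]
  rw [Finset.prod_const, Finset.card_univ, Fintype.card_fin]
  congr 1
  convert row_lemma p S i₀ hi₀

def comp {m n : ℕ} (C : Fin m → Fin n → Bool) (y : Fin m → Bool) : Finset (Fin n) :=
  univ.filter fun i => ∀ j, C j i = true → y j = true

lemma ind_nonneg {P : Prop} [Decidable P] : (0:ℝ) ≤ if P then 1 else 0 := by
  split <;> norm_num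

lemma subset_comp {m n : ℕ} (C : Fin m → Fin n → Bool) (S : Finset (Fin n)) :
    S ⊆ comp C (outcome C S) := by
  intro i hi
  simp only [comp, mem_filter, mem_univ, true_and]
  intro j hj
  simp only [outcome, decide_eq_true_eq]
  exact ⟨i, hi, hj⟩

lemma ind_fail_le {m n : ℕ} (C : Fin m → Fin n → Bool) (S : Finset (Fin n)) :
    (if comp C (outcome C S) ≠ S then (1:ℝ) else 0) ≤
      ∑ i ∈ univ \ S, (if (∀ j, C j i = true → ∃ i' ∈ S, C j i' = true) then (1:ℝ) else 0) := by
  by_cases h : comp C (outcome C S) ≠ S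
  · rw [if_pos h]
    have hss : S ⊂ comp C (outcome C S) :=
      ssubset_of_subset_of_ne (subset_comp C S) (Ne.symm h)
    obtain ⟨i, hic, hiS⟩ := Finset.exists_of_ssubset hss
    have h1 : (1:ℝ) ≤ (if (∀ j, C j i = true → ∃ i' ∈ S, C j i' = true) then (1:ℝ) else 0) := by
      rw [if_pos]
      intro j hj
      have := (Finset.mem_filter.1 hic).2 j hj
      simpa [outcome] using this
    exact le_trans h1 (Finset.single_le_sum
      (f := fun i' => (if (∀ j, C j i' = true → ∃ i'' ∈ S, C j i'' = true) then (1:ℝ) else 0))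
      (fun i' _ => ind_nonneg) (Finset.mem_sdiff.2 ⟨mem_univ i, hiS⟩))
  · rw [if_neg h]
    exact Finset.sum_nonneg fun i _ => ind_nonneg

lemma fail_bound {m n : ℕ} {p : ℝ} (h0 : 0 ≤ p) (h1 : p ≤ 1) (S : Finset (Fin n)) :
    ∑ C : Fin m → Fin n → Bool, matW m n p C * (if comp C (outcome C S) ≠ S then (1:ℝ) else 0)
      ≤ n * (1 - p * (1 - p) ^ S.card) ^ m := by
  have hq : p * (1 - p) ^ S.card ≤ 1 := by
    calc p * (1 - p) ^ S.card ≤ 1 * 1 := by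
          apply mul_le_mul h1 (pow_le_one₀ (by linarith) (by linarith)) (pow_nonneg (by linarith) _) one_pos.le
      _ = 1 := by norm_num
  have hq0 : 0 ≤ 1 - p * (1 - p) ^ S.card := by linarith
  calc ∑ C : Fin m → Fin n → Bool, matW m n p C * (if comp C (outcome C S) ≠ S then (1:ℝ) else 0)
      ≤ ∑ C : Fin m → Fin n → Bool, matW m n p C *
        ∑ i ∈ univ \ S, (if (∀ j, C j i = true → ∃ i' ∈ S, C j i' = true) then (1:ℝ) else 0) := by
        exact Finset.sum_le_sum fun C _ =>
          mul_le_mul_of_nonneg_left (ind_fail_le C S) (matW_nonneg h0 h1 C)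
    _ = ∑ i ∈ univ \ S, ∑ C : Fin m → Fin n → Bool, matW m n p C *
        (if (∀ j, C j i = true → ∃ i' ∈ S, C j i' = true) then (1:ℝ) else 0) := by
        simp_rw [Finset.mul_sum]
        rw [Finset.sum_comm]
    _ = ∑ i ∈ univ \ S, (1 - p * (1 - p) ^ S.card) ^ m := by
        refine Finset.sum_congr rfl fun i hi => ?_
        exact matW_hidden m n p S i (Finset.mem_sdiff.1 hi).2
    _ = ((univ \ S).card : ℝ) * (1 - p * (1 - p) ^ S.card) ^ m := by
        rw [Finset.sum_const, nsmul_eq_mul]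
    _ ≤ n * (1 - p * (1 - p) ^ S.card) ^ m := by
        apply mul_le_mul_of_nonneg_right _ (pow_nonneg hq0 m)
        have := Finset.card_le_card (Finset.subset_univ (univ \ S))
        simp only [Finset.card_univ, Fintype.card_fin] at this
        exact_mod_cast this

lemma Z_pos {n : ℕ} {lam : ℝ} (hl : 0 < lam) :
    0 < ∑ d ∈ Finset.range (n + 1), lam ^ d / (d.factorial : ℝ) := by
  apply Finset.sum_pos
  · intro d _
    positivity
  · exact ⟨0, Finset.mem_range.2 (Nat.succ_pos n)⟩

lemma pgtWeight_nonneg {n : ℕ} {lam : ℝ} (hl : 0 < lam) (S : Finset (Fin n)) :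
    0 ≤ pgtWeight n lam S := by
  unfold pgtWeight
  have := Z_pos (n := n) hl
  positivity

lemma sum_card_fun (n : ℕ) (f : ℕ → ℝ) :
    ∑ S : Finset (Fin n), f S.card = ∑ d ∈ Finset.range (n + 1), (n.choose d : ℝ) * f d := by
  have h1 : (univ : Finset (Finset (Fin n))) = (univ : Finset (Fin n)).powerset := by
    ext S; simp
  rw [h1, Finset.sum_powerset]
  rw [Finset.card_univ, Fintype.card_fin]
  refine Finset.sum_congr rfl fun d _ => ?_
  have : ∀ S ∈ Finset.powersetCard d (univ : Finset (Fin n)), f S.card = f d := by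
    intro S hS
    rw [(Finset.mem_powersetCard.1 hS).2]
  rw [Finset.sum_congr rfl this, Finset.sum_const, Finset.card_powersetCard,
    Finset.card_univ, Fintype.card_fin, nsmul_eq_mul]

lemma pgtWeight_eq {n : ℕ} {lam : ℝ} (hl : 0 < lam) (S : Finset (Fin n)) :
    pgtWeight n lam S =
      (1 / ∑ d ∈ Finset.range (n + 1), lam ^ d / (d.factorial : ℝ)) *
        (lam ^ S.card * ((n - S.card).factorial / n.factorial)) := by
  unfold pgtWeight
  rw [Real.exp_neg]
  have he : Real.exp lam ≠ 0 := (Real.exp_pos lam).ne'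
  have hZ : (∑ d ∈ Finset.range (n + 1), lam ^ d / (d.factorial : ℝ)) ≠ 0 := (Z_pos hl).ne'
  have hn0 : (n.factorial : ℝ) ≠ 0 := by exact_mod_cast n.factorial_ne_zero
  field_simp

lemma choose_fact {n d : ℕ} (hd : d ≤ n) :
    (n.choose d : ℝ) * ((n - d).factorial / n.factorial) = 1 / d.factorial := by
  have h := Nat.choose_mul_factorial_mul_factorial hd
  have hR : ((n.choose d : ℝ)) * d.factorial * (n - d).factorial = n.factorial := by
    exact_mod_cast congrArg (Nat.cast : ℕ → ℝ) h
  have hd0 : (d.factorial : ℝ) ≠ 0 := by exact_mod_cast d.factorial_ne_zero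
  have hn0 : (n.factorial : ℝ) ≠ 0 := by exact_mod_cast n.factorial_ne_zero
  field_simp
  linear_combination hR

lemma sum_pgtWeight {n : ℕ} {lam : ℝ} (hl : 0 < lam) :
    ∑ S : Finset (Fin n), pgtWeight n lam S = 1 := by
  simp_rw [pgtWeight_eq hl]
  rw [sum_card_fun n (fun d => (1 / ∑ d ∈ Finset.range (n + 1), lam ^ d / (d.factorial : ℝ)) *
    (lam ^ d * ((n - d).factorial / n.factorial)))]
  have : ∀ d ∈ Finset.range (n + 1), (n.choose d : ℝ) *
      ((1 / ∑ e ∈ Finset.range (n + 1), lam ^ e / (e.factorial : ℝ)) *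
        (lam ^ d * ((n - d).factorial / n.factorial)))
      = (1 / ∑ e ∈ Finset.range (n + 1), lam ^ e / (e.factorial : ℝ)) * (lam ^ d / d.factorial) := by
    intro d hd
    have hdn : d ≤ n := by
      have := Finset.mem_range.1 hd; omega
    rw [show (n.choose d : ℝ) * ((1 / ∑ e ∈ Finset.range (n + 1), lam ^ e / (e.factorial : ℝ)) *
        (lam ^ d * ((n - d).factorial / n.factorial)))
      = (1 / ∑ e ∈ Finset.range (n + 1), lam ^ e / (e.factorial : ℝ)) * lam ^ d *
        ((n.choose d : ℝ) * ((n - d).factorial / n.factorial)) by ring, choose_fact hdn]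
    ring
  rw [Finset.sum_congr rfl this, ← Finset.mul_sum]
  field_simp

lemma tail_sum {n K : ℕ} {lam : ℝ} (hl : 0 < lam) :
    ∑ d ∈ Finset.range (n+1), (if K < d then lam ^ d / (d.factorial : ℝ) else 0)
      ≤ lam / (K+1) * ∑ d ∈ Finset.range (n+1), lam ^ d / (d.factorial : ℝ) := by
  have hfil : ∑ d ∈ Finset.range (n+1), (if K < d then lam ^ d / (d.factorial : ℝ) else 0)
      = ∑ d ∈ Finset.Ioc K n, lam ^ d / (d.factorial : ℝ) := by
    rw [← Finset.sum_filter]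
    congr 1
    ext d
    simp only [Finset.mem_filter, Finset.mem_range, Finset.mem_Ioc]
    omega
  rw [hfil]
  have step1 : ∑ d ∈ Finset.Ioc K n, lam ^ d / (d.factorial : ℝ)
      ≤ ∑ d ∈ Finset.Ioc K n, lam / (K+1) * (lam ^ (d-1) / ((d-1).factorial : ℝ)) := by
    refine Finset.sum_le_sum fun d hd => ?_
    obtain ⟨hKd, hdn⟩ := Finset.mem_Ioc.1 hd
    obtain ⟨e, rfl⟩ : ∃ e, d = e + 1 := ⟨d - 1, by omega⟩
    simp only [Nat.add_sub_cancel]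
    rw [pow_succ, Nat.factorial_succ, div_mul_div_comm, mul_comm lam (lam ^ e)]
    push_cast
    apply div_le_div_of_nonneg_left (by positivity) (by positivity)
    have hKe : (K : ℝ) ≤ (e : ℝ) := Nat.cast_le.2 (by omega)
    have hf : (0:ℝ) ≤ (e.factorial : ℝ) := by positivity
    nlinarith
  have step2 : ∑ d ∈ Finset.Ioc K n, lam / (K+1) * (lam ^ (d-1) / ((d-1).factorial : ℝ))
      = lam / (K+1) * ∑ d ∈ Finset.Ico K n, lam ^ d / (d.factorial : ℝ) := by
    rw [← Finset.mul_sum]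
    congr 1
    refine Finset.sum_nbij' (fun d => d - 1) (fun d => d + 1) ?_ ?_ ?_ ?_ ?_
    · intro a ha; simp only [Finset.mem_Ioc] at ha; simp only [Finset.mem_Ico]; omega
    · intro a ha; simp only [Finset.mem_Ico] at ha; simp only [Finset.mem_Ioc]; omega
    · intro a ha; simp only [Finset.mem_Ioc] at ha; omega
    · intro a ha; simp only [Finset.mem_Ico] at ha; omega
    · intro a ha; dsimp only
  rw [step2] at step1
  refine le_trans step1 ?_
  apply mul_le_mul_of_nonneg_left _ (by positivity)
  apply Finset.sum_le_sum_of_subset_of_nonneg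
  · intro d hd
    simp only [Finset.mem_Ico] at hd
    simp only [Finset.mem_range]
    omega
  · intro d _ _
    positivity

lemma error_le (n mm K : ℕ) (p lam : ℝ) (h0 : 0 ≤ p) (h1 : p ≤ 1) (hl : 0 < lam) :
    ∑ C : Fin mm → Fin n → Bool, ∑ S : Finset (Fin n),
        matW mm n p C * pgtWeight n lam S * (if comp C (outcome C S) ≠ S then (1:ℝ) else 0)
      ≤ n * (1 - p * (1 - p) ^ K) ^ mm + lam / (K + 1) := by
  have hZ := Z_pos (n := n) hl
  have h1p0 : (0:ℝ) ≤ 1 - p := by linarith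
  have h1p1 : (1:ℝ) - p ≤ 1 := by linarith
  have hqK : 0 ≤ 1 - p * (1 - p) ^ K := by
    have := pow_le_one₀ h1p0 h1p1 (n := K)
    nlinarith
  set A : ℝ := (n : ℝ) * (1 - p * (1 - p) ^ K) ^ mm with hAdef
  have hA0 : 0 ≤ A := by positivity
  set P : Finset (Fin n) → ℝ := fun S => ∑ C : Fin mm → Fin n → Bool,
    matW mm n p C * (if comp C (outcome C S) ≠ S then (1:ℝ) else 0) with hPdef
  have hswap : ∑ C : Fin mm → Fin n → Bool, ∑ S : Finset (Fin n),
      matW mm n p C * pgtWeight n lam S * (if comp C (outcome C S) ≠ S then (1:ℝ) else 0)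
      = ∑ S : Finset (Fin n), pgtWeight n lam S * P S := by
    rw [Finset.sum_comm]
    refine Finset.sum_congr rfl fun S _ => ?_
    rw [hPdef, Finset.mul_sum]
    refine Finset.sum_congr rfl fun C _ => by ring
  rw [hswap]
  have hP1 : ∀ S : Finset (Fin n), P S ≤ 1 := by
    intro S
    rw [hPdef]
    calc ∑ C : Fin mm → Fin n → Bool,
        matW mm n p C * (if comp C (outcome C S) ≠ S then (1:ℝ) else 0)
        ≤ ∑ C : Fin mm → Fin n → Bool, matW mm n p C := by
          refine Finset.sum_le_sum fun C _ => ?_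
          refine mul_le_of_le_one_right (matW_nonneg h0 h1 C) ?_
          split <;> norm_num
      _ = 1 := matW_sum mm n p
  have hP0 : ∀ S : Finset (Fin n), 0 ≤ P S := by
    intro S
    refine Finset.sum_nonneg fun C _ => mul_nonneg (matW_nonneg h0 h1 C) ind_nonneg
  have hPA : ∀ S : Finset (Fin n), S.card ≤ K → P S ≤ A := by
    intro S hcard
    refine le_trans (fail_bound h0 h1 S) ?_
    rw [hAdef]
    apply mul_le_mul_of_nonneg_left _ (by positivity)
    apply pow_le_pow_left₀
    · have := pow_le_one₀ h1p0 h1p1 (n := S.card)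
      nlinarith
    · have := pow_le_pow_of_le_one h1p0 h1p1 hcard
      nlinarith
  have hstep : ∑ S : Finset (Fin n), pgtWeight n lam S * P S
      ≤ ∑ S : Finset (Fin n), pgtWeight n lam S * (if S.card ≤ K then A else 1) := by
    refine Finset.sum_le_sum fun S _ => ?_
    apply mul_le_mul_of_nonneg_left _ (pgtWeight_nonneg hl S)
    by_cases h : S.card ≤ K
    · rw [if_pos h]; exact hPA S h
    · rw [if_neg h]; exact hP1 S
  refine le_trans hstep ?_
  have hsplit : ∀ S : Finset (Fin n), pgtWeight n lam S * (if S.card ≤ K then A else 1)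
      ≤ pgtWeight n lam S * A + pgtWeight n lam S * (if K < S.card then 1 else 0) := by
    intro S
    have hw := pgtWeight_nonneg hl S
    by_cases h : S.card ≤ K
    · rw [if_pos h, if_neg (by omega)]
      nlinarith
    · rw [if_neg h, if_pos (by omega)]
      nlinarith
  refine le_trans (Finset.sum_le_sum fun S _ => hsplit S) ?_
  rw [Finset.sum_add_distrib]
  have hfirst : ∑ S : Finset (Fin n), pgtWeight n lam S * A = A := by
    rw [← Finset.sum_mul, sum_pgtWeight hl, one_mul]
  have hsecond : ∑ S : Finset (Fin n), pgtWeight n lam S * (if K < S.card then 1 else 0)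
      ≤ lam / (K + 1) := by
    have heq : ∑ S : Finset (Fin n), pgtWeight n lam S * (if K < S.card then 1 else 0)
        = ∑ d ∈ Finset.range (n + 1), (n.choose d : ℝ) *
          ((1 / ∑ e ∈ Finset.range (n + 1), lam ^ e / (e.factorial : ℝ)) *
            (lam ^ d * ((n - d).factorial / n.factorial)) * (if K < d then 1 else 0)) := by
      have : ∀ S : Finset (Fin n), pgtWeight n lam S * (if K < S.card then 1 else 0)
          = (fun d : ℕ => (1 / ∑ e ∈ Finset.range (n + 1), lam ^ e / (e.factorial : ℝ)) *
            (lam ^ d * ((n - d).factorial / n.factorial)) * (if K < d then 1 else 0)) S.card := by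
        intro S
        rw [pgtWeight_eq hl]
      rw [Finset.sum_congr rfl fun S _ => this S]
      exact sum_card_fun n (fun d => (1 / ∑ e ∈ Finset.range (n + 1), lam ^ e / (e.factorial : ℝ)) *
        (lam ^ d * ((n - d).factorial / n.factorial)) * (if K < d then 1 else 0))
    rw [heq]
    have hterm : ∀ d ∈ Finset.range (n + 1), (n.choose d : ℝ) *
        ((1 / ∑ e ∈ Finset.range (n + 1), lam ^ e / (e.factorial : ℝ)) *
          (lam ^ d * ((n - d).factorial / n.factorial)) * (if K < d then 1 else 0))
        = (1 / ∑ e ∈ Finset.range (n + 1), lam ^ e / (e.factorial : ℝ)) *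
          (if K < d then lam ^ d / (d.factorial : ℝ) else 0) := by
      intro d hd
      have hdn : d ≤ n := by have := Finset.mem_range.1 hd; omega
      by_cases h : K < d
      · rw [if_pos h, if_pos h, mul_one]
        rw [show (n.choose d : ℝ) * ((1 / ∑ e ∈ Finset.range (n + 1), lam ^ e / (e.factorial : ℝ)) *
          (lam ^ d * ((n - d).factorial / n.factorial)))
          = (1 / ∑ e ∈ Finset.range (n + 1), lam ^ e / (e.factorial : ℝ)) * lam ^ d *
            ((n.choose d : ℝ) * ((n - d).factorial / n.factorial)) by ring, choose_fact hdn]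
        ring
      · rw [if_neg h, if_neg h]
        ring
    rw [Finset.sum_congr rfl hterm, ← Finset.mul_sum]
    calc (1 / ∑ e ∈ Finset.range (n + 1), lam ^ e / (e.factorial : ℝ)) *
        ∑ d ∈ Finset.range (n + 1), (if K < d then lam ^ d / (d.factorial : ℝ) else 0)
        ≤ (1 / ∑ e ∈ Finset.range (n + 1), lam ^ e / (e.factorial : ℝ)) *
          (lam / (K + 1) * ∑ d ∈ Finset.range (n + 1), lam ^ d / (d.factorial : ℝ)) := by
          exact mul_le_mul_of_nonneg_left (tail_sum hl) (by positivity)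
      _ = lam / (K + 1) := by
          field_simp
  rw [hfirst]
  linarith

lemma q_lower (K : ℕ) (hK : 2 ≤ K) :
    (1:ℝ) / (8 * K) ≤ (1 / K) * (1 - 1 / K) ^ K := by
  have hKR : (2:ℝ) ≤ K := by exact_mod_cast hK
  have hKpos : (0:ℝ) < K := by linarith
  have hstep : Real.exp (-(2 / K)) ≤ 1 - 1 / (K:ℝ) := by
    have h1 : 2 / (K:ℝ) + 1 ≤ Real.exp (2 / K) := Real.add_one_le_exp _
    have h2 : (0:ℝ) < 2 / (K:ℝ) + 1 := by positivity
    rw [Real.exp_neg]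
    have h3 : (Real.exp (2 / K))⁻¹ ≤ (2 / (K:ℝ) + 1)⁻¹ := by
      exact inv_anti₀ h2 h1
    refine le_trans h3 ?_
    rw [inv_le_iff_one_le_mul₀ h2]
    have hK1 : (1:ℝ) / K ≤ 1 / 2 := by
      apply div_le_div_of_nonneg_left one_pos.le (by norm_num) hKR
    have : 0 < 1 - 1 / (K:ℝ) := by linarith
    field_simp
    nlinarith
  have hpow : Real.exp (-2) ≤ (1 - 1 / (K:ℝ)) ^ K := by
    have := pow_le_pow_left₀ (Real.exp_pos _).le hstep K
    refine le_trans (le_of_eq ?_) this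
    rw [← Real.exp_nat_mul]
    congr 1
    field_simp
  have hexp2 : Real.exp 2 ≤ 8 := by
    have h := Real.exp_one_lt_d9
    have : Real.exp 2 = Real.exp 1 * Real.exp 1 := by
      rw [← Real.exp_add]; norm_num
    nlinarith [Real.exp_pos 1]
  have h8 : (1:ℝ) / 8 ≤ Real.exp (-2) := by
    rw [Real.exp_neg, one_div]
    exact inv_anti₀ (Real.exp_pos 2) hexp2
  have : (1:ℝ) / 8 ≤ (1 - 1 / (K:ℝ)) ^ K := le_trans h8 hpow
  calc (1:ℝ) / (8 * K) = (1 / K) * (1 / 8) := by field_simp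
    _ ≤ (1 / K) * (1 - 1 / K) ^ K := by
        apply mul_le_mul_of_nonneg_left this (by positivity)

lemma second_term (n mm K : ℕ) (hK : 2 ≤ K) (hn : 2 ≤ n)
    (hm : 40 * (K:ℝ) * Real.log n ≤ mm) :
    (n:ℝ) * (1 - (1/(K:ℝ)) * (1 - 1/(K:ℝ)) ^ K) ^ mm ≤ (n:ℝ)⁻¹ := by
  have hKR : (2:ℝ) ≤ K := by exact_mod_cast hK
  have hKpos : (0:ℝ) < K := by linarith
  set q : ℝ := (1/(K:ℝ)) * (1 - 1/(K:ℝ)) ^ K with hqdef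
  have hq1 : q ≤ 1 := by
    have h0 : (0:ℝ) ≤ 1 - 1/(K:ℝ) := by
      rw [sub_nonneg, div_le_one hKpos]; linarith
    have h1 : (1 - 1/(K:ℝ)) ^ K ≤ 1 := pow_le_one₀ h0 (by
      have : (0:ℝ) < 1/(K:ℝ) := by positivity
      linarith)
    have h2 : 1/(K:ℝ) ≤ 1 := by rw [div_le_one hKpos]; linarith
    calc q ≤ 1/(K:ℝ) * 1 := by
          apply mul_le_mul_of_nonneg_left h1 (by positivity)
      _ ≤ 1 := by rwa [mul_one]
  have hqlo : (1:ℝ)/(8*K) ≤ q := q_lower K hK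
  have hq0 : 0 ≤ q := le_trans (by positivity) hqlo
  have hlogn : 0 ≤ Real.log n := Real.log_nonneg (by exact_mod_cast Nat.one_le_of_lt hn)
  have hnR : (1:ℝ) ≤ n := by exact_mod_cast Nat.one_le_of_lt hn
  have step1 : (1 - q) ^ mm ≤ Real.exp (-q) ^ mm := by
    apply pow_le_pow_left₀ (by linarith)
    linarith [Real.add_one_le_exp (-q)]
  have step2 : Real.exp (-q) ^ mm = Real.exp (mm * (-q)) := (Real.exp_nat_mul _ _).symm
  have step3 : Real.exp ((mm:ℝ) * (-q)) ≤ Real.exp (-(5 * Real.log n)) := by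
    apply Real.exp_le_exp.2
    have h5 : 5 * Real.log n ≤ (mm:ℝ) * q := by
      have h6 : (mm:ℝ) * (1/(8*K)) ≤ (mm:ℝ) * q :=
        mul_le_mul_of_nonneg_left hqlo (Nat.cast_nonneg mm)
      have h7 : 40 * (K:ℝ) * Real.log n * (1/(8*K)) ≤ (mm:ℝ) * (1/(8*K)) := by
        apply mul_le_mul_of_nonneg_right hm (by positivity)
      have h8 : 40 * (K:ℝ) * Real.log n * (1/(8*K)) = 5 * Real.log n := by
        field_simp
        ring
      linarith
    linarith
  have step4 : (n:ℝ) * Real.exp (-(5 * Real.log n)) ≤ (n:ℝ)⁻¹ := by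
    have hexplog : Real.exp (Real.log n) = n := Real.exp_log (by linarith)
    have : Real.exp (-(5 * Real.log n)) = ((n:ℝ)⁻¹) ^ 5 := by
      rw [show -(5 * Real.log n) = (5:ℕ) * (-Real.log n) by push_cast; ring,
        Real.exp_nat_mul, Real.exp_neg, hexplog]
    rw [this]
    have hn0 : (0:ℝ) < n := by linarith
    have h0 : (0:ℝ) ≤ (n:ℝ)⁻¹ := by positivity
    have h1 : (n:ℝ)⁻¹ ≤ 1 := by
      rw [inv_le_one_iff₀]; right; exact hnR
    have heq : (n:ℝ) * ((n:ℝ)⁻¹)^5 = ((n:ℝ)⁻¹)^4 := by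
      field_simp
    rw [heq]
    calc ((n:ℝ)⁻¹)^4 ≤ ((n:ℝ)⁻¹)^1 := pow_le_pow_of_le_one h0 h1 (by norm_num)
      _ = (n:ℝ)⁻¹ := pow_one _
  calc (n:ℝ) * (1 - q) ^ mm ≤ (n:ℝ) * Real.exp (-(5 * Real.log n)) := by
        apply mul_le_mul_of_nonneg_left _ (by positivity)
        rw [← step2] at step3
        exact le_trans step1 step3
    _ ≤ (n:ℝ)⁻¹ := step4

theorem stmt5 (lam : ℕ → ℝ) (hpos : ∀ n, 0 < lam n)
    (hlamo : Tendsto (fun n => lam n / n) atTop (nhds 0))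
    (hlaminf : Tendsto lam atTop atTop)
    (ε : ℝ) (hε : 0 < ε) :
    ∃ (m : ℕ → ℕ)
      (μ : (n : ℕ) → (Fin (m n) → Fin n → Bool) → ℝ)
      (g : (n : ℕ) → (Fin (m n) → Fin n → Bool) → (Fin (m n) → Bool) → Finset (Fin n))
      (δ : ℕ → ℝ),
      (∀ n C, 0 ≤ μ n C) ∧
      (∀ n, ∑ C : Fin (m n) → Fin n → Bool, μ n C = 1) ∧
      Tendsto δ atTop (nhds 0) ∧
      (∀ᶠ n in atTop,
        (m n : ℝ) ≤ 3 / Real.logb 2 3 * lam n ^ ((1 : ℝ) + ε) * Real.logb 2 n * (1 + δ n)) ∧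
      Tendsto (fun n => ∑ C : Fin (m n) → Fin n → Bool, ∑ S : Finset (Fin n),
          μ n C * pgtWeight n (lam n) S * (if g n C (outcome C S) ≠ S then 1 else 0))
        atTop (nhds 0) := by
    classical
  set K : ℕ → ℕ := fun n => ⌈(lam n) ^ ((1:ℝ) + ε/2)⌉₊ + 2 with hKdef
  set M : ℕ → ℕ := fun n => ⌈(40:ℝ) * (K n) * Real.log n⌉₊ with hMdef
  have hK2 : ∀ n, 2 ≤ K n := fun n => Nat.le_add_left 2 _
  have hp0 : ∀ n, (0:ℝ) ≤ 1 / (K n : ℝ) := fun n => by positivity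
  have hp1 : ∀ n, 1 / (K n : ℝ) ≤ 1 := fun n => by
    have : (1:ℝ) ≤ (K n : ℝ) := by exact_mod_cast Nat.one_le_of_lt (hK2 n)
    rw [div_le_one (by linarith)]; linarith
  refine ⟨M, fun n C => matW (M n) n (1/(K n : ℝ)) C, fun n C y => comp C y, fun _ => 0,
    fun n C => matW_nonneg (hp0 n) (hp1 n) C,
    fun n => matW_sum (M n) n _,
    tendsto_const_nhds, ?_, ?_⟩
  · -- m bound
    have hlog2pos : (0:ℝ) < Real.log 2 := Real.log_pos (by norm_num)
    have hlog3pos : (0:ℝ) < Real.log 3 := Real.log_pos (by norm_num)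
    have hlog3le : Real.log 3 ≤ 2 := by
      rw [Real.log_le_iff_le_exp (by norm_num)]
      linarith [Real.add_one_le_exp 2]
    filter_upwards [hlaminf.eventually_ge_atTop (max 1 ((108:ℝ) ^ ((2:ℝ)/ε))),
      eventually_ge_atTop 3] with n hlam hn3
    have hl1 : (1:ℝ) ≤ lam n := le_trans (le_max_left _ _) hlam
    have hl108 : (108:ℝ) ^ ((2:ℝ)/ε) ≤ lam n := le_trans (le_max_right _ _) hlam
    set L := lam n with hLdef
    set x := L ^ ((1:ℝ) + ε/2) with hxdef
    have hx1 : (1:ℝ) ≤ x := Real.one_le_rpow hl1 (by positivity)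
    have hKle : (K n : ℝ) ≤ 4 * x := by
      have h1 : ((⌈x⌉₊ : ℝ)) < x + 1 := Nat.ceil_lt_add_one (by positivity)
      have h2 : (K n : ℝ) = (⌈x⌉₊ : ℝ) + 2 := by
        rw [hKdef]; push_cast; ring
      linarith
    have hlogn1 : (1:ℝ) ≤ Real.log n := by
      rw [Real.le_log_iff_exp_le (by positivity : (0:ℝ) < (n:ℝ))]
      have : Real.exp 1 < 2.7182818286 := Real.exp_one_lt_d9
      have : (3:ℝ) ≤ (n:ℝ) := by exact_mod_cast hn3
      linarith [Real.exp_one_lt_d9]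
    have hMle : (M n : ℝ) ≤ 161 * x * Real.log n := by
      have h1 : ((M n : ℝ)) < 40 * (K n : ℝ) * Real.log n + 1 := by
        rw [hMdef]
        exact Nat.ceil_lt_add_one (by positivity)
      have h2 : 40 * (K n : ℝ) * Real.log n ≤ 160 * x * Real.log n := by
        have := mul_le_mul_of_nonneg_right hKle (by linarith : (0:ℝ) ≤ Real.log n)
        nlinarith
      nlinarith [mul_le_mul_of_nonneg_left hlogn1 (by positivity : (0:ℝ) ≤ x)]
    have h108 : (108:ℝ) ≤ L ^ (ε/2) := by
      have h1 : ((108:ℝ) ^ ((2:ℝ)/ε)) ^ (ε/2) ≤ L ^ (ε/2) :=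
        Real.rpow_le_rpow (by positivity) hl108 (by positivity)
      refine le_trans (le_of_eq ?_) h1
      rw [← Real.rpow_mul (by norm_num : (0:ℝ) ≤ 108)]
      rw [show (2:ℝ)/ε * (ε/2) = 1 by field_simp]
      rw [Real.rpow_one]
    have hLsplit : L ^ ((1:ℝ) + ε) = x * L ^ (ε/2) := by
      rw [hxdef, ← Real.rpow_add (hpos n)]
      congr 1
      ring
    have key : (161:ℝ) ≤ 3 / Real.log 3 * L ^ (ε/2) := by
      have h32 : (3:ℝ)/2 ≤ 3 / Real.log 3 :=
        div_le_div_of_nonneg_left (by norm_num) hlog3pos hlog3le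
      have hL0 : (0:ℝ) ≤ L ^ (ε/2) := by positivity
      nlinarith
    have hRHS : 3 / Real.logb 2 3 * L ^ ((1:ℝ) + ε) * Real.logb 2 (n:ℝ) * (1 + 0)
        = (3 / Real.log 3 * L ^ (ε/2)) * (x * Real.log n) := by
      rw [hLsplit]
      simp only [Real.logb]
      field_simp
      ring
    rw [hRHS]
    calc (M n : ℝ) ≤ 161 * x * Real.log n := hMle
      _ = 161 * (x * Real.log n) := by ring
      _ ≤ (3 / Real.log 3 * L ^ (ε/2)) * (x * Real.log n) :=
          mul_le_mul_of_nonneg_right key (by positivity)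
  · -- error tends to zero
    have hb : Tendsto (fun n : ℕ => ((n:ℝ))⁻¹ + lam n ^ (-(ε/2))) atTop (nhds 0) := by
      have t1 : Tendsto (fun n : ℕ => ((n:ℝ))⁻¹) atTop (nhds 0) :=
        tendsto_inv_atTop_zero.comp tendsto_natCast_atTop_atTop
      have t2 : Tendsto (fun n => lam n ^ (-(ε/2))) atTop (nhds 0) :=
        (tendsto_rpow_neg_atTop (by positivity)).comp hlaminf
      simpa using t1.add t2
    refine squeeze_zero' ?_ ?_ hb
    · filter_upwards with n
      refine Finset.sum_nonneg fun C _ => Finset.sum_nonneg fun S _ => ?_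
      exact mul_nonneg (mul_nonneg (matW_nonneg (hp0 n) (hp1 n) C)
        (pgtWeight_nonneg (hpos n) S)) ind_nonneg
    · filter_upwards [eventually_ge_atTop 2] with n hn2
      refine le_trans (error_le n (M n) (K n) (1/(K n : ℝ)) (lam n)
        (hp0 n) (hp1 n) (hpos n)) ?_
      have hfirst : (n:ℝ) * (1 - (1/(K n:ℝ)) * (1 - 1/(K n:ℝ)) ^ (K n)) ^ (M n) ≤ (n:ℝ)⁻¹ := by
        apply second_term n (M n) (K n) (hK2 n) hn2
        exact Nat.le_ceil _
      have hsecond : lam n / ((K n : ℝ) + 1) ≤ lam n ^ (-(ε/2)) := by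
        have hceil : lam n ^ ((1:ℝ) + ε/2) ≤ (K n : ℝ) + 1 := by
          have h1 : lam n ^ ((1:ℝ) + ε/2) ≤ (⌈lam n ^ ((1:ℝ) + ε/2)⌉₊ : ℝ) := Nat.le_ceil _
          have h2 : (K n : ℝ) = (⌈lam n ^ ((1:ℝ) + ε/2)⌉₊ : ℝ) + 2 := by
            rw [hKdef]; push_cast; ring
          linarith
        have hxpos : (0:ℝ) < lam n ^ ((1:ℝ) + ε/2) := Real.rpow_pos_of_pos (hpos n) _
        have h3 : lam n / ((K n : ℝ) + 1) ≤ lam n / lam n ^ ((1:ℝ) + ε/2) :=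
          div_le_div_of_nonneg_left (hpos n).le hxpos hceil
        refine le_trans h3 (le_of_eq ?_)
        rw [show -(ε/2) = (1:ℝ) - (1 + ε/2) by ring, Real.rpow_sub (hpos n), Real.rpow_one]
      exact add_le_add hfirst hsecond
end
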